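/- arXiv:2208.09497 — 2 statements merged into one kernel-verified Lean document; each statement's English description precedes it below -/
import Mathlib

section
/- Let G = S₄ be the symmetric group on {1,2,3,4}, and let H_K = {σ ∈ G : σ(4) = 4}, H_{K₃} = the stabilizer in G of the partition {{1,2},{3,4}} (a dihedral group of order 8), and H_F = {id, (1 2), (3 4), (1 2)(3 4)}. Then for every finite-dimensional complex representation V of G, dim_ℂ V^{H_K} + dim_ℂ V^{H_{K₃}} = dim_ℂ V^{H_F} + dim_ℂ V^{G}, where V^{H} denotes the subspace of vectors fixed by all elements of the subgroup H. -/
open Pointwise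

/-- The point stabilizer `{σ ∈ S₄ : σ 4 = 4}` of the last point, isomorphic to `S₃`. -/
def HK : Subgroup (Equiv.Perm (Fin 4)) :=
  MulAction.stabilizer (Equiv.Perm (Fin 4)) (3 : Fin 4)

/-- The stabilizer in `S₄` of the partition `{{1,2},{3,4}}`, a dihedral group of order 8. -/
def HK3 : Subgroup (Equiv.Perm (Fin 4)) :=
  MulAction.stabilizer (Equiv.Perm (Fin 4)) ({{0, 1}, {2, 3}} : Set (Set (Fin 4)))

/-- The subgroup `{id, (1 2), (3 4), (1 2)(3 4)}` of `S₄`. -/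
def HF : Subgroup (Equiv.Perm (Fin 4)) where
  carrier := {σ | σ = 1 ∨ σ = Equiv.swap 0 1 ∨ σ = Equiv.swap 2 3 ∨
    σ = Equiv.swap 0 1 * Equiv.swap 2 3}
  one_mem' := by decide
  mul_mem' := by decide
  inv_mem' := by decide

abbrev s (a b : Fin 4) : Equiv.Perm (Fin 4) := Equiv.swap a b

abbrev lHK : List (Equiv.Perm (Fin 4)) := [1, s 1 2, s 0 1, s 0 1 * s 1 2, s 0 2 * s 1 2, s 0 2]
abbrev lHK3 : List (Equiv.Perm (Fin 4)) := [1, s 2 3, s 0 1, s 0 1 * s 2 3, s 0 2 * s 1 3, s 0 2 * s 1 3 * s 2 3, s 0 3 * s 1 2 * s 2 3, s 0 3 * s 1 2]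
abbrev lHF : List (Equiv.Perm (Fin 4)) := [1, s 0 1, s 2 3, s 0 1 * s 2 3]
abbrev lG : List (Equiv.Perm (Fin 4)) := [1, s 2 3, s 1 2, s 1 2 * s 2 3, s 1 3 * s 2 3, s 1 3, s 0 1, s 0 1 * s 2 3, s 0 1 * s 1 2, s 0 1 * s 1 2 * s 2 3, s 0 1 * s 1 3 * s 2 3, s 0 1 * s 1 3, s 0 2 * s 1 2, s 0 2 * s 1 2 * s 2 3, s 0 2, s 0 2 * s 2 3, s 0 2 * s 1 3, s 0 2 * s 1 3 * s 2 3, s 0 3 * s 1 3 * s 2 3, s 0 3 * s 1 3, s 0 3 * s 2 3, s 0 3, s 0 3 * s 1 2 * s 2 3, s 0 3 * s 1 2]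

lemma finrank_inv_eq (G : Type) [Group G] [Fintype G]
    (V : Type) [AddCommGroup V] [Module ℂ V] [FiniteDimensional ℂ V]
    (ρ : Representation ℂ G V) :
    (Fintype.card G : ℂ) * (Module.finrank ℂ ρ.invariants : ℂ)
      = ∑ g : G, LinearMap.trace ℂ V (ρ g) := by
  have : Invertible (Fintype.card G : ℂ) :=
    invertibleOfNonzero (Nat.cast_ne_zero.mpr Fintype.card_ne_zero)
  have h := FDRep.average_char_eq_finrank_invariants (FDRep.of ρ)
  have h3 : ∀ g, (FDRep.of ρ).character g = LinearMap.trace ℂ V (ρ g) := fun g => rfl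
  simp only [h3] at h
  have h4 : (Module.finrank ℂ ρ.invariants : ℂ)
      = ⅟(Fintype.card G : ℂ) • ∑ g : G, LinearMap.trace ℂ V (ρ g) := by
    rw [invOf_eq_inv, smul_eq_mul, ← Nat.card_eq_fintype_card]; exact h.symm
  rw [h4, smul_eq_mul, ← mul_assoc, mul_invOf_self, one_mul]

lemma mem_HK3_iff (g : Equiv.Perm (Fin 4)) :
    g ∈ HK3 ↔ g • ({{0, 1}, {2, 3}} : Finset (Finset (Fin 4))) = {{0, 1}, {2, 3}} := by
  have key : ∀ (F : Finset (Finset (Fin 4))),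
      g • ((fun t : Finset (Fin 4) => (t : Set (Fin 4))) '' (↑F : Set (Finset (Fin 4))))
        = (fun t : Finset (Fin 4) => (t : Set (Fin 4))) '' (↑(g • F) : Set (Finset (Fin 4))) := by
    intro F
    rw [Finset.coe_smul_finset, ← Set.image_smul, ← Set.image_smul, Set.image_image,
      Set.image_image]
    exact Set.image_congr' fun t => (Finset.coe_smul_finset g t).symm
  have hS : ({{0, 1}, {2, 3}} : Set (Set (Fin 4)))
      = (fun t : Finset (Fin 4) => (t : Set (Fin 4))) ''
          (↑({{0, 1}, {2, 3}} : Finset (Finset (Fin 4))) : Set (Finset (Fin 4))) := by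
    simp only [Finset.coe_insert, Finset.coe_singleton, Set.image_insert_eq,
      Set.image_singleton]
  have hmem : g ∈ HK3 ↔ g • ({{0, 1}, {2, 3}} : Set (Set (Fin 4))) = {{0, 1}, {2, 3}} :=
    Iff.rfl
  rw [hmem, hS, key]
  constructor
  · intro h
    exact Finset.coe_injective
      (Set.image_injective.mpr Finset.coe_injective h)
  · intro h
    rw [h]

lemma key_sum (f : Equiv.Perm (Fin 4) → ℂ)
    (hf : ∀ t g : Equiv.Perm (Fin 4), f (t * g * t⁻¹) = f g) :
    4 * (lHK.map f).sum + 3 * (lHK3.map f).sum = 6 * (lHF.map f).sum + (lG.map f).sum := by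
  have h_0_2_1_3 : f (s 1 2) = f (s 0 1) := by rw [show (s 1 2 : Equiv.Perm (Fin 4)) = (s 0 1 * s 1 2) * (s 0 1) * (s 0 1 * s 1 2)⁻¹ from by decide, hf]
  have h_2_0_1_3 : f (s 0 2 * s 1 2) = f (s 0 1 * s 1 2) := by rw [show (s 0 2 * s 1 2 : Equiv.Perm (Fin 4)) = (s 1 2) * (s 0 1 * s 1 2) * (s 1 2)⁻¹ from by decide, hf]
  have h_2_1_0_3 : f (s 0 2) = f (s 0 1) := by rw [show (s 0 2 : Equiv.Perm (Fin 4)) = (s 1 2) * (s 0 1) * (s 1 2)⁻¹ from by decide, hf]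
  have h_0_1_3_2 : f (s 2 3) = f (s 0 1) := by rw [show (s 2 3 : Equiv.Perm (Fin 4)) = (s 0 2 * s 1 3) * (s 0 1) * (s 0 2 * s 1 3)⁻¹ from by decide, hf]
  have h_2_3_0_1 : f (s 0 2 * s 1 3) = f (s 0 1 * s 2 3) := by rw [show (s 0 2 * s 1 3 : Equiv.Perm (Fin 4)) = (s 1 2) * (s 0 1 * s 2 3) * (s 1 2)⁻¹ from by decide, hf]
  have h_2_3_1_0 : f (s 0 2 * s 1 3 * s 2 3) = f (s 0 1 * s 1 2 * s 2 3) := by rw [show (s 0 2 * s 1 3 * s 2 3 : Equiv.Perm (Fin 4)) = (s 1 2) * (s 0 1 * s 1 2 * s 2 3) * (s 1 2)⁻¹ from by decide, hf]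
  have h_3_2_0_1 : f (s 0 3 * s 1 2 * s 2 3) = f (s 0 1 * s 1 2 * s 2 3) := by rw [show (s 0 3 * s 1 2 * s 2 3 : Equiv.Perm (Fin 4)) = (s 1 3 * s 2 3) * (s 0 1 * s 1 2 * s 2 3) * (s 1 3 * s 2 3)⁻¹ from by decide, hf]
  have h_3_2_1_0 : f (s 0 3 * s 1 2) = f (s 0 1 * s 2 3) := by rw [show (s 0 3 * s 1 2 : Equiv.Perm (Fin 4)) = (s 1 3 * s 2 3) * (s 0 1 * s 2 3) * (s 1 3 * s 2 3)⁻¹ from by decide, hf]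
  have h_0_2_3_1 : f (s 1 2 * s 2 3) = f (s 0 1 * s 1 2) := by rw [show (s 1 2 * s 2 3 : Equiv.Perm (Fin 4)) = (s 0 1 * s 1 2 * s 2 3) * (s 0 1 * s 1 2) * (s 0 1 * s 1 2 * s 2 3)⁻¹ from by decide, hf]
  have h_0_3_1_2 : f (s 1 3 * s 2 3) = f (s 0 1 * s 1 2) := by rw [show (s 1 3 * s 2 3 : Equiv.Perm (Fin 4)) = (s 0 1 * s 1 3) * (s 0 1 * s 1 2) * (s 0 1 * s 1 3)⁻¹ from by decide, hf]
  have h_0_3_2_1 : f (s 1 3) = f (s 0 1) := by rw [show (s 1 3 : Equiv.Perm (Fin 4)) = (s 0 1 * s 1 3 * s 2 3) * (s 0 1) * (s 0 1 * s 1 3 * s 2 3)⁻¹ from by decide, hf]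
  have h_1_3_0_2 : f (s 0 1 * s 1 3 * s 2 3) = f (s 0 1 * s 1 2 * s 2 3) := by rw [show (s 0 1 * s 1 3 * s 2 3 : Equiv.Perm (Fin 4)) = (s 2 3) * (s 0 1 * s 1 2 * s 2 3) * (s 2 3)⁻¹ from by decide, hf]
  have h_1_3_2_0 : f (s 0 1 * s 1 3) = f (s 0 1 * s 1 2) := by rw [show (s 0 1 * s 1 3 : Equiv.Perm (Fin 4)) = (s 2 3) * (s 0 1 * s 1 2) * (s 2 3)⁻¹ from by decide, hf]
  have h_2_0_3_1 : f (s 0 2 * s 1 2 * s 2 3) = f (s 0 1 * s 1 2 * s 2 3) := by rw [show (s 0 2 * s 1 2 * s 2 3 : Equiv.Perm (Fin 4)) = (s 1 2 * s 2 3) * (s 0 1 * s 1 2 * s 2 3) * (s 1 2 * s 2 3)⁻¹ from by decide, hf]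
  have h_2_1_3_0 : f (s 0 2 * s 2 3) = f (s 0 1 * s 1 2) := by rw [show (s 0 2 * s 2 3 : Equiv.Perm (Fin 4)) = (s 1 2 * s 2 3) * (s 0 1 * s 1 2) * (s 1 2 * s 2 3)⁻¹ from by decide, hf]
  have h_3_0_1_2 : f (s 0 3 * s 1 3 * s 2 3) = f (s 0 1 * s 1 2 * s 2 3) := by rw [show (s 0 3 * s 1 3 * s 2 3 : Equiv.Perm (Fin 4)) = (s 1 3) * (s 0 1 * s 1 2 * s 2 3) * (s 1 3)⁻¹ from by decide, hf]
  have h_3_0_2_1 : f (s 0 3 * s 1 3) = f (s 0 1 * s 1 2) := by rw [show (s 0 3 * s 1 3 : Equiv.Perm (Fin 4)) = (s 1 3 * s 2 3) * (s 0 1 * s 1 2) * (s 1 3 * s 2 3)⁻¹ from by decide, hf]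
  have h_3_1_0_2 : f (s 0 3 * s 2 3) = f (s 0 1 * s 1 2) := by rw [show (s 0 3 * s 2 3 : Equiv.Perm (Fin 4)) = (s 1 3) * (s 0 1 * s 1 2) * (s 1 3)⁻¹ from by decide, hf]
  have h_3_1_2_0 : f (s 0 3) = f (s 0 1) := by rw [show (s 0 3 : Equiv.Perm (Fin 4)) = (s 1 3 * s 2 3) * (s 0 1) * (s 1 3 * s 2 3)⁻¹ from by decide, hf]
  simp only [lHK, lHK3, lHF, lG, List.map_cons, List.map_nil, List.sum_cons, List.sum_nil,
    h_0_2_1_3, h_2_0_1_3, h_2_1_0_3, h_0_1_3_2, h_2_3_0_1, h_2_3_1_0, h_3_2_0_1, h_3_2_1_0, h_0_2_3_1, h_0_3_1_2, h_0_3_2_1, h_1_3_0_2, h_1_3_2_0, h_2_0_3_1, h_2_1_3_0, h_3_0_1_2, h_3_0_2_1, h_3_1_0_2, h_3_1_2_0]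
  ring

theorem fixed_space_dim_identity_S4
    (V : Type) [AddCommGroup V] [Module ℂ V] [FiniteDimensional ℂ V]
    (ρ : Representation ℂ (Equiv.Perm (Fin 4)) V) :
    Module.finrank ℂ (Representation.invariants (ρ.comp HK.subtype))
        + Module.finrank ℂ (Representation.invariants (ρ.comp HK3.subtype))
      = Module.finrank ℂ (Representation.invariants (ρ.comp HF.subtype)) + Module.finrank ℂ (Representation.invariants ρ) := by
  classical
  set f : Equiv.Perm (Fin 4) → ℂ := fun g => LinearMap.trace ℂ V (ρ g) with hfdef
  have hf : ∀ t g : Equiv.Perm (Fin 4), f (t * g * t⁻¹) = f g := by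
    intro t g
    simp only [hfdef, map_mul]
    rw [LinearMap.trace_mul_comm, ← mul_assoc, ← map_mul, inv_mul_cancel, map_one, one_mul]
  letI : Fintype ↥HK := Fintype.ofFinite _
  letI : Fintype ↥HK3 := Fintype.ofFinite _
  letI : Fintype ↥HF := Fintype.ofFinite _
  have hmHK : ∀ g : Equiv.Perm (Fin 4), g ∈ lHK.toFinset ↔ g ∈ HK := by
    have : ∀ g : Equiv.Perm (Fin 4), g ∈ HK ↔ g 3 = 3 := fun g => Iff.rfl
    simp only [this]; decide
  have hmHK3 : ∀ g : Equiv.Perm (Fin 4), g ∈ lHK3.toFinset ↔ g ∈ HK3 := by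
    simp only [mem_HK3_iff]; decide
  have hmHF : ∀ g : Equiv.Perm (Fin 4), g ∈ lHF.toFinset ↔ g ∈ HF := by
    have : ∀ g : Equiv.Perm (Fin 4), g ∈ HF ↔ (g = 1 ∨ g = Equiv.swap 0 1 ∨ g = Equiv.swap 2 3 ∨
      g = Equiv.swap 0 1 * Equiv.swap 2 3) := fun g => Iff.rfl
    simp only [this]; decide
  -- sums over subgroups as list sums
  have eHK : ∑ g : ↥HK, f ↑g = (lHK.map f).sum := by
    rw [← Finset.sum_subtype lHK.toFinset hmHK f, List.sum_toFinset f (by decide)]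
  have eHK3 : ∑ g : ↥HK3, f ↑g = (lHK3.map f).sum := by
    rw [← Finset.sum_subtype lHK3.toFinset hmHK3 f, List.sum_toFinset f (by decide)]
  have eHF : ∑ g : ↥HF, f ↑g = (lHF.map f).sum := by
    rw [← Finset.sum_subtype lHF.toFinset hmHF f, List.sum_toFinset f (by decide)]
  have eG : ∑ g : Equiv.Perm (Fin 4), f g = (lG.map f).sum := by
    rw [show (Finset.univ : Finset (Equiv.Perm (Fin 4))) = lG.toFinset from by decide,
      List.sum_toFinset f (by decide)]
  have cHK : Fintype.card ↥HK = 6 := by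
    rw [Fintype.card_congr (Equiv.subtypeEquivRight (fun x => (hmHK x).symm)),
      Fintype.card_coe]
    decide
  have cHK3 : Fintype.card ↥HK3 = 8 := by
    rw [Fintype.card_congr (Equiv.subtypeEquivRight (fun x => (hmHK3 x).symm)),
      Fintype.card_coe]
    decide
  have cHF : Fintype.card ↥HF = 4 := by
    rw [Fintype.card_congr (Equiv.subtypeEquivRight (fun x => (hmHF x).symm)),
      Fintype.card_coe]
    decide
  have cG : Fintype.card (Equiv.Perm (Fin 4)) = 24 := by decide
  have h1 : (6 : ℂ) * (Module.finrank ℂ (Representation.invariants (ρ.comp HK.subtype)) : ℂ)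
      = (lHK.map f).sum := by
    rw [← eHK]
    have h := finrank_inv_eq ↥HK V (ρ.comp HK.subtype)
    rw [cHK] at h
    exact_mod_cast h
  have h2 : (8 : ℂ) * (Module.finrank ℂ (Representation.invariants (ρ.comp HK3.subtype)) : ℂ)
      = (lHK3.map f).sum := by
    rw [← eHK3]
    have h := finrank_inv_eq ↥HK3 V (ρ.comp HK3.subtype)
    rw [cHK3] at h
    exact_mod_cast h
  have h3 : (4 : ℂ) * (Module.finrank ℂ (Representation.invariants (ρ.comp HF.subtype)) : ℂ)
      = (lHF.map f).sum := by
    rw [← eHF]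
    have h := finrank_inv_eq ↥HF V (ρ.comp HF.subtype)
    rw [cHF] at h
    exact_mod_cast h
  have h4 : (24 : ℂ) * (Module.finrank ℂ (Representation.invariants ρ) : ℂ)
      = (lG.map f).sum := by
    rw [← eG]
    have h := finrank_inv_eq (Equiv.Perm (Fin 4)) V ρ
    rw [cG] at h
    exact_mod_cast h
  have hsum := key_sum f hf
  rw [← h1, ← h2, ← h3, ← h4] at hsum
  have hc : ((Module.finrank ℂ (Representation.invariants (ρ.comp HK.subtype))
        + Module.finrank ℂ (Representation.invariants (ρ.comp HK3.subtype)) : ℕ) : ℂ)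
      = ((Module.finrank ℂ (Representation.invariants (ρ.comp HF.subtype))
        + Module.finrank ℂ (Representation.invariants ρ) : ℕ) : ℂ) := by
    push_cast
    linear_combination hsum / 24
  exact_mod_cast hc
end

section
/- Let L be a number field, let A, B ∈ L with 4A³ + 27B² ≠ 0, and let E be the elliptic curve y² = x³ + Ax + B over L. Let d ∈ Lˣ be a non-square, F = L(√d) the corresponding quadratic extension, and E^d the quadratic twist of E by d, i.e. the elliptic curve y² = x³ + A d² x + B d³ over L. Then rk(E/F) = rk(E/L) + rk(E^d/L), i.e. dim_ℚ(E(F) ⊗_ℤ ℚ) = dim_ℚ(E(L) ⊗_ℤ ℚ) + dim_ℚ(E^d(L) ⊗_ℤ ℚ). -/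
open WeierstrassCurve WeierstrassCurve.Affine TensorProduct

open Polynomial

namespace QTScale

variable {K : Type*} [Field K] [DecidableEq K] (W W' : WeierstrassCurve.Affine K) (u : K)

section lemmas

variable (hu : u ≠ 0)
  (h1 : W'.a₁ = u * W.a₁) (h2 : W'.a₂ = u ^ 2 * W.a₂) (h3 : W'.a₃ = u ^ 3 * W.a₃)
  (h4 : W'.a₄ = u ^ 4 * W.a₄) (h6 : W'.a₆ = u ^ 6 * W.a₆)

include h1 h2 h3 h4 h6

lemma scale_equation {x y : K} (h : W.Equation x y) :
    W'.Equation (u ^ 2 * x) (u ^ 3 * y) := by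
  rw [equation_iff'] at h ⊢
  rw [h1, h2, h3, h4, h6]
  linear_combination (u ^ 6) * h

include hu

lemma scale_nonsingular {x y : K} (h : W.Nonsingular x y) :
    W'.Nonsingular (u ^ 2 * x) (u ^ 3 * y) := by
  rw [nonsingular_iff'] at h ⊢
  refine ⟨scale_equation W W' u h1 h2 h3 h4 h6 h.1, ?_⟩
  rcases h.2 with h' | h'
  · left
    have key : W'.a₁ * (u ^ 3 * y) - (3 * (u ^ 2 * x) ^ 2 + 2 * W'.a₂ * (u ^ 2 * x) + W'.a₄)
        = u ^ 4 * (W.a₁ * y - (3 * x ^ 2 + 2 * W.a₂ * x + W.a₄)) := by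
      rw [h1, h2, h4]; ring
    rw [key]
    exact mul_ne_zero (pow_ne_zero _ hu) h'
  · right
    have key : 2 * (u ^ 3 * y) + W'.a₁ * (u ^ 2 * x) + W'.a₃
        = u ^ 3 * (2 * y + W.a₁ * x + W.a₃) := by
      rw [h1, h3]; ring
    rw [key]
    exact mul_ne_zero (pow_ne_zero _ hu) h'

omit hu h2 h4 h6 in
lemma scale_negY (x y : K) :
    W'.negY (u ^ 2 * x) (u ^ 3 * y) = u ^ 3 * W.negY x y := by
  rw [negY, negY, h1, h3]; ring

omit hu h3 h4 h6 in
lemma scale_addX (x₁ x₂ l : K) :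
    W'.addX (u ^ 2 * x₁) (u ^ 2 * x₂) (u * l) = u ^ 2 * W.addX x₁ x₂ l := by
  rw [addX, addX, h1, h2]; ring

omit hu h3 h4 h6 in
lemma scale_negAddY (x₁ x₂ y₁ l : K) :
    W'.negAddY (u ^ 2 * x₁) (u ^ 2 * x₂) (u ^ 3 * y₁) (u * l)
      = u ^ 3 * W.negAddY x₁ x₂ y₁ l := by
  rw [negAddY, negAddY, scale_addX W W' u h1 h2]; ring

omit hu h4 h6 in
lemma scale_addY (x₁ x₂ y₁ l : K) :
    W'.addY (u ^ 2 * x₁) (u ^ 2 * x₂) (u ^ 3 * y₁) (u * l) = u ^ 3 * W.addY x₁ x₂ y₁ l := by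
  rw [WeierstrassCurve.Affine.addY, WeierstrassCurve.Affine.addY,
    scale_negAddY W W' u h1 h2, scale_addX W W' u h1 h2,
    scale_negY W W' u h1 h3]

omit h6 in
lemma scale_slope (x₁ x₂ y₁ y₂ : K) :
    W'.slope (u ^ 2 * x₁) (u ^ 2 * x₂) (u ^ 3 * y₁) (u ^ 3 * y₂) = u * W.slope x₁ x₂ y₁ y₂ := by
  have hu2 : (u ^ 2 : K) ≠ 0 := pow_ne_zero _ hu
  have hu3 : (u ^ 3 : K) ≠ 0 := pow_ne_zero _ hu
  by_cases hx : x₁ = x₂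
  · by_cases hy : y₁ = W.negY x₂ y₂
    · rw [slope_of_Y_eq (by rw [hx] : u ^ 2 * x₁ = u ^ 2 * x₂)
          (by rw [hy, scale_negY W W' u h1 h3] : u ^ 3 * y₁ = W'.negY (u ^ 2 * x₂) (u ^ 3 * y₂)),
        slope_of_Y_eq hx hy, mul_zero]
    · have hy' : u ^ 3 * y₁ ≠ W'.negY (u ^ 2 * x₂) (u ^ 3 * y₂) := by
        rw [scale_negY W W' u h1 h3]
        exact fun hc => hy (mul_left_cancel₀ hu3 hc)
      have key : ∀ N D : K, (u ^ 4 * N) / (u ^ 3 * D) = u * (N / D) := by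
        intro N D
        rcases eq_or_ne D 0 with h | h
        · simp [h]
        · field_simp
      rw [slope_of_Y_ne (y₂ := y₂) hx hy, slope_of_Y_ne (by rw [hx] : u ^ 2 * x₁ = u ^ 2 * x₂) hy',
        scale_negY W W' u h1 h3, h1, h2, h4,
        show 3 * (u ^ 2 * x₁) ^ 2 + 2 * (u ^ 2 * W.a₂) * (u ^ 2 * x₁) + u ^ 4 * W.a₄
            - u * W.a₁ * (u ^ 3 * y₁)
          = u ^ 4 * (3 * x₁ ^ 2 + 2 * W.a₂ * x₁ + W.a₄ - W.a₁ * y₁) by ring,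
        show u ^ 3 * y₁ - u ^ 3 * W.negY x₁ y₁ = u ^ 3 * (y₁ - W.negY x₁ y₁) by ring,
        key _ _]
  · have hx' : u ^ 2 * x₁ ≠ u ^ 2 * x₂ := fun hc => hx (mul_left_cancel₀ hu2 hc)
    have key : ∀ N D : K, (u ^ 3 * N) / (u ^ 2 * D) = u * (N / D) := by
      intro N D
      rcases eq_or_ne D 0 with h | h
      · simp [h]
      · field_simp
    rw [slope_of_X_ne hx', slope_of_X_ne hx,
      show u ^ 3 * y₁ - u ^ 3 * y₂ = u ^ 3 * (y₁ - y₂) by ring,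
      show u ^ 2 * x₁ - u ^ 2 * x₂ = u ^ 2 * (x₁ - x₂) by ring,
      key _ _]

end lemmas

section hom

open WeierstrassCurve.Affine.Point

variable (hu : u ≠ 0)
  (h1 : W'.a₁ = u * W.a₁) (h2 : W'.a₂ = u ^ 2 * W.a₂) (h3 : W'.a₃ = u ^ 3 * W.a₃)
  (h4 : W'.a₄ = u ^ 4 * W.a₄) (h6 : W'.a₆ = u ^ 6 * W.a₆)

variable {W W' u} in
/-- The map on points induced by the scaling (x, y) ↦ (u²x, u³y). -/
def scaleFun : W.Point → W'.Point
  | 0 => 0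
  | Point.some _ _ h => Point.some _ _ (scale_nonsingular W W' u hu h1 h2 h3 h4 h6 h)

variable {W W' u} in
/-- The group homomorphism on points induced by the scaling (x, y) ↦ (u²x, u³y). -/
noncomputable def scaleHom : W.Point →+ W'.Point where
  toFun := scaleFun hu h1 h2 h3 h4 h6
  map_zero' := rfl
  map_add' := by
    have hu2 : (u ^ 2 : K) ≠ 0 := pow_ne_zero _ hu
    have hu3 : (u ^ 3 : K) ≠ 0 := pow_ne_zero _ hu
    rintro (_ | @⟨x₁, y₁, hP⟩) (_ | @⟨x₂, y₂, hQ⟩)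
    any_goals rfl
    by_cases h : x₁ = x₂ ∧ y₁ = W.negY x₂ y₂
    · simp only [add_of_Y_eq h.1 h.2, scaleFun]
      rw [add_of_Y_eq (by rw [h.1]) (by rw [scale_negY W W' u h1 h3, h.2])]
    · have hxy : x₁ = x₂ → y₁ ≠ W.negY x₂ y₂ := fun hx hy => h ⟨hx, hy⟩
      have hxy' : u ^ 2 * x₁ = u ^ 2 * x₂ →
          u ^ 3 * y₁ ≠ W'.negY (u ^ 2 * x₂) (u ^ 3 * y₂) := by
        intro hx hy
        rw [scale_negY W W' u h1 h3] at hy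
        exact hxy (mul_left_cancel₀ hu2 hx) (mul_left_cancel₀ hu3 hy)
      simp only [add_some h, scaleFun]
      rw [add_some (fun hc => hxy' hc.1 hc.2)]
      simp only [Point.some.injEq]
      rw [scale_slope W W' u hu h1 h2 h3 h4,
        scale_addX W W' u h1 h2, scale_addY W W' u h1 h2 h3]
      exact ⟨rfl, rfl⟩

variable {W W' u}

lemma scaleHom_apply_some {x y : K} (h : W.Nonsingular x y) :
    scaleHom hu h1 h2 h3 h4 h6 (Point.some _ _ h) =
      Point.some _ _ (scale_nonsingular W W' u hu h1 h2 h3 h4 h6 h) :=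
  rfl

lemma scaleHom_injective : Function.Injective (scaleHom hu h1 h2 h3 h4 h6) := by
  have hu2 : (u ^ 2 : K) ≠ 0 := pow_ne_zero _ hu
  have hu3 : (u ^ 3 : K) ≠ 0 := pow_ne_zero _ hu
  rintro (_ | _) (_ | _) h
  any_goals contradiction
  · rfl
  · rw [scaleHom_apply_some hu h1 h2 h3 h4 h6, scaleHom_apply_some hu h1 h2 h3 h4 h6,
      Point.some.injEq] at h
    simp only [Point.some.injEq]
    exact ⟨mul_left_cancel₀ hu2 h.1, mul_left_cancel₀ hu3 h.2⟩

end hom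

end QTScale

namespace QTConj

variable {L F : Type} [Field L] [CharZero L] [Field F] [Algebra L F]
  (d : L) (hd0 : d ≠ 0) (hd : ¬ IsSquare d)
  (hF2 : Module.finrank L F = 2) (s : F) (hs : s ^ 2 = algebraMap L F d)

include hd0 hs in
lemma s_ne_zero : s ≠ 0 := by
  intro h
  rw [h, zero_pow (by norm_num)] at hs
  exact hd0 ((_root_.map_eq_zero (algebraMap L F)).mp hs.symm)

include hd hs in
lemma s_not_mem : ∀ a : L, algebraMap L F a ≠ s := by
  intro a ha
  apply hd
  refine ⟨a, ?_⟩
  have : algebraMap L F (a * a) = algebraMap L F d := by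
    rw [map_mul, ha, ← sq, hs]
  exact ((algebraMap L F).injective this).symm

include hd hs in
lemma li_one_s : LinearIndependent L ![(1 : F), s] := by
  rw [LinearIndependent.pair_iff]
  intro p q hpq
  by_cases hq : q = 0
  · subst hq
    refine ⟨?_, rfl⟩
    simp only [zero_smul, add_zero, smul_eq_mul, mul_one] at hpq
    have : algebraMap L F p = 0 := by rwa [Algebra.smul_def, mul_one] at hpq
    exact (algebraMap L F).injective (by simpa using this)
  · exfalso
    apply s_not_mem d hd s hs (q⁻¹ * -p)
    have h1 : q • s = algebraMap L F (-p) := by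
      have : q • s = -(p • (1 : F)) := by
        rw [eq_neg_iff_add_eq_zero, add_comm]; exact hpq
      rw [this, Algebra.smul_def, mul_one, ← map_neg]
    calc algebraMap L F (q⁻¹ * -p) = q⁻¹ • algebraMap L F (-p) := by
          rw [Algebra.smul_def, map_mul]
      _ = q⁻¹ • (q • s) := by rw [h1]
      _ = s := by rw [← mul_smul, inv_mul_cancel₀ hq, one_smul]

include hd hs hF2 in
lemma exists_decomp (z : F) : ∃ a b : L, z = algebraMap L F a + b • s := by
  have hli := li_one_s d hd s hs
  let B := basisOfLinearIndependentOfCardEqFinrank hli (by simp [hF2])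
  have hB : ⇑B = ![(1 : F), s] := coe_basisOfLinearIndependentOfCardEqFinrank hli _
  refine ⟨B.repr z 0, B.repr z 1, ?_⟩
  have := B.sum_repr z
  rw [Fin.sum_univ_two, hB] at this
  simp only [Matrix.cons_val_zero, Matrix.cons_val_one, Matrix.head_cons] at this
  rw [Algebra.smul_def, mul_one] at this
  exact this.symm

include hd hs hF2 in
lemma exists_conj : ∃ σ : F ≃ₐ[L] F, σ s = -s
    ∧ (∀ z : F, σ (σ z) = z)
    ∧ (∀ z : F, σ z = z → ∃ a : L, z = algebraMap L F a)
    ∧ (∀ z : F, σ z = -z → ∃ b : L, z = algebraMap L F b * s) := by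
  -- the minimal polynomial X ^ 2 - C d
  set p : L[X] := X ^ 2 - C d with hp
  have hirr : Irreducible p := X_pow_sub_C_irreducible_of_prime Nat.prime_two
    (fun b hb => hd ⟨b, by rw [← hb]; ring⟩)
  haveI : Fact (Irreducible p) := ⟨hirr⟩
  have hp0 : p ≠ 0 := hirr.ne_zero
  have hdim : Module.finrank L (AdjoinRoot p) = 2 := by
    rw [(AdjoinRoot.powerBasis hp0).finrank, AdjoinRoot.powerBasis_dim]
    simp [hp]
  haveI : FiniteDimensional L F := FiniteDimensional.of_finrank_pos (by rw [hF2]; norm_num)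
  haveI : FiniteDimensional L (AdjoinRoot p) :=
    FiniteDimensional.of_finrank_pos (by rw [hdim]; norm_num)
  -- two algebra homs AdjoinRoot p →ₐ[L] F sending the root to s and -s
  have aeval_s : (aeval s) p = 0 := by
    simp [hp, hs]
  have aeval_neg_s : (aeval (-s)) p = 0 := by
    simp [hp, hs]
  have mkEquiv : ∀ t : F, (aeval t) p = 0 → ∃ e : AdjoinRoot p ≃ₐ[L] F,
      e (AdjoinRoot.root p) = t := by
    intro t ht
    let e : AdjoinRoot p →ₐ[L] F := AdjoinRoot.liftAlgHom p (Algebra.ofId L F) t ht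
    have hinj : Function.Injective e := e.toRingHom.injective
    have hbij : Function.Bijective e := by
      refine ⟨hinj, ?_⟩
      have := (LinearMap.injective_iff_surjective_of_finrank_eq_finrank
        (f := e.toLinearMap) (by rw [hdim, hF2])).mp hinj
      exact this
    refine ⟨AlgEquiv.ofBijective e hbij, ?_⟩
    exact AdjoinRoot.liftAlgHom_root p (Algebra.ofId L F) t ht
  obtain ⟨e₁, he₁⟩ := mkEquiv s aeval_s
  obtain ⟨e₂, he₂⟩ := mkEquiv (-s) aeval_neg_s
  set σ : F ≃ₐ[L] F := e₁.symm.trans e₂ with hσ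
  have hσs : σ s = -s := by
    show e₂ (e₁.symm s) = -s
    conv_lhs => rw [← he₁, e₁.symm_apply_apply]
    rw [he₂]
  have hdec := exists_decomp d hd hF2 s hs
  have happly : ∀ a b : L, σ (algebraMap L F a + b • s) = algebraMap L F a - b • s := by
    intro a b
    rw [map_add, AlgEquiv.commutes, map_smul, hσs, smul_neg, sub_eq_add_neg]
  refine ⟨σ, hσs, ?_, ?_, ?_⟩
  · intro z
    obtain ⟨a, b, rfl⟩ := hdec z
    rw [happly, sub_eq_add_neg, ← neg_smul, happly, neg_smul, sub_neg_eq_add]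
  · intro z hz
    obtain ⟨a, b, rfl⟩ := hdec z
    rw [happly] at hz
    have hb : b • s + b • s = 0 := by linear_combination -hz
    rw [← add_smul] at hb
    rcases smul_eq_zero.mp hb with h | h
    · have : b = 0 := by
        have h2 : (2 : L) * b = 0 := by linear_combination h
        rcases mul_eq_zero.mp h2 with h2 | h2
        · exact absurd h2 two_ne_zero
        · exact h2
      exact ⟨a, by rw [this, zero_smul, add_zero]⟩
    · exact ⟨a, by rw [h, smul_zero, add_zero]⟩
  · intro z hz
    obtain ⟨a, b, rfl⟩ := hdec z
    rw [happly] at hz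
    have ha : algebraMap L F a + algebraMap L F a = 0 := by linear_combination hz
    rw [← map_add] at ha
    have ha' : a + a = 0 := (algebraMap L F).injective (by simpa using ha)
    have : a = 0 := by
      have h2 : (2 : L) * a = 0 := by linear_combination ha'
      rcases mul_eq_zero.mp h2 with h2 | h2
      · exact absurd h2 two_ne_zero
      · exact h2
    refine ⟨b, ?_⟩
    rw [this, map_zero, zero_add, Algebra.smul_def]

end QTConj

namespace QTRank

variable {M N : Type} [AddCommGroup M] [AddCommGroup N]

/-- An additive equivalence between `ℚ`-vector spaces as a `ℚ`-linear equivalence. -/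
def addEquivToRat {V W : Type} [AddCommGroup V] [AddCommGroup W] [Module ℚ V] [Module ℚ W]
    (e : V ≃+ W) : V ≃ₗ[ℚ] W :=
  { e with map_smul' := map_rat_smul e.toAddMonoidHom }

lemma rank_eq_of_double (u : M →+ N) (w : N →+ M)
    (hwu : ∀ x, w (u x) = x + x) (huw : ∀ y, u (w y) = y + y) :
    Module.rank ℚ (ℚ ⊗[ℤ] M) = Module.rank ℚ (ℚ ⊗[ℤ] N) := by
  let U : ℚ ⊗[ℤ] M →ₗ[ℚ] ℚ ⊗[ℤ] N :=
    (LinearMap.lTensor ℚ u.toIntLinearMap).toAddMonoidHom.toRatLinearMap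
  let W : ℚ ⊗[ℤ] N →ₗ[ℚ] ℚ ⊗[ℤ] M :=
    (LinearMap.lTensor ℚ w.toIntLinearMap).toAddMonoidHom.toRatLinearMap
  have hWU : ∀ z : ℚ ⊗[ℤ] M, W (U z) = z + z := by
    intro z
    induction z using TensorProduct.induction_on with
    | zero => simp
    | tmul q m =>
      show (LinearMap.lTensor ℚ w.toIntLinearMap) ((LinearMap.lTensor ℚ u.toIntLinearMap)
        (q ⊗ₜ[ℤ] m)) = _
      rw [LinearMap.lTensor_tmul, LinearMap.lTensor_tmul]
      show q ⊗ₜ[ℤ] (w (u m)) = _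
      rw [hwu, TensorProduct.tmul_add]
    | add x y hx hy =>
      rw [map_add, map_add, hx, hy]
      abel
  have hUW : ∀ z : ℚ ⊗[ℤ] N, U (W z) = z + z := by
    intro z
    induction z using TensorProduct.induction_on with
    | zero => simp
    | tmul q m =>
      show (LinearMap.lTensor ℚ u.toIntLinearMap) ((LinearMap.lTensor ℚ w.toIntLinearMap)
        (q ⊗ₜ[ℤ] m)) = _
      rw [LinearMap.lTensor_tmul, LinearMap.lTensor_tmul]
      show q ⊗ₜ[ℤ] (u (w m)) = _
      rw [huw, TensorProduct.tmul_add]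
    | add x y hx hy =>
      rw [map_add, map_add, hx, hy]
      abel
  have hU : Function.Bijective U := by
    constructor
    · intro x y hxy
      have h2 : x + x = y + y := by rw [← hWU x, ← hWU y, hxy]
      have : (2 : ℚ) • x = (2 : ℚ) • y := by
        rw [two_smul, two_smul]; exact h2
      have h2ne : (2 : ℚ) ≠ 0 := two_ne_zero
      calc x = (2 : ℚ)⁻¹ • ((2 : ℚ) • x) := by rw [inv_smul_smul₀ h2ne]
        _ = (2 : ℚ)⁻¹ • ((2 : ℚ) • y) := by rw [this]
        _ = y := by rw [inv_smul_smul₀ h2ne]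
    · intro y
      refine ⟨W ((2 : ℚ)⁻¹ • y), ?_⟩
      rw [map_smul, map_smul, hUW, ← two_smul ℚ y, smul_smul,
        inv_mul_cancel₀ (two_ne_zero), one_smul]
  exact (LinearEquiv.ofBijective U hU).rank_eq

lemma rank_prod_eq (P Q : Type) [AddCommGroup P] [AddCommGroup Q] :
    Module.rank ℚ (ℚ ⊗[ℤ] (P × Q))
      = Module.rank ℚ (ℚ ⊗[ℤ] P) + Module.rank ℚ (ℚ ⊗[ℤ] Q) := by
  have e : (ℚ ⊗[ℤ] (P × Q)) ≃ₗ[ℚ] (ℚ ⊗[ℤ] P) × (ℚ ⊗[ℤ] Q) :=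
    addEquivToRat (TensorProduct.prodRight ℤ ℚ ℚ P Q).toAddEquiv
  rw [e.rank_eq, rank_prod']

end QTRank

open Classical in
theorem rank_of_quadratic_twist
    (L : Type) [Field L] [NumberField L] (A B : L) (hAB : 4 * A ^ 3 + 27 * B ^ 2 ≠ 0)
    (E : WeierstrassCurve L) (hE : E = ⟨0, 0, 0, A, B⟩)
    (d : L) (hd0 : d ≠ 0) (hd : ¬ IsSquare d)
    (Ed : WeierstrassCurve L) (hEd : Ed = ⟨0, 0, 0, A * d ^ 2, B * d ^ 3⟩)
    (F : Type) [Field F] [Algebra L F] (hF2 : Module.finrank L F = 2)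
    (s : F) (hs : s ^ 2 = algebraMap L F d) :
    Module.rank ℚ (ℚ ⊗[ℤ] (E.baseChange F).toAffine.Point)
      = Module.rank ℚ (ℚ ⊗[ℤ] (E.baseChange L).toAffine.Point) + Module.rank ℚ (ℚ ⊗[ℤ] (Ed.baseChange L).toAffine.Point) := by
  have hsne : s ≠ 0 := QTConj.s_ne_zero d hd0 s hs
  have hsine : s⁻¹ ≠ 0 := inv_ne_zero hsne
  have hinj : Function.Injective (Algebra.ofId L F) := RingHom.injective _
  have hs4 : s ^ 4 = algebraMap L F (d ^ 2) := by rw [map_pow, ← hs]; ring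
  have hs6 : s ^ 6 = algebraMap L F (d ^ 3) := by rw [map_pow, ← hs]; ring
  -- coefficients of the two base-changed curves
  have e1F : (E.baseChange F).a₁ = 0 := by simp [hE, WeierstrassCurve.baseChange]
  have e2F : (E.baseChange F).a₂ = 0 := by simp [hE, WeierstrassCurve.baseChange]
  have e3F : (E.baseChange F).a₃ = 0 := by simp [hE, WeierstrassCurve.baseChange]
  have e4F : (E.baseChange F).a₄ = algebraMap L F A := by
    simp [hE, WeierstrassCurve.baseChange]
  have e6F : (E.baseChange F).a₆ = algebraMap L F B := by
    simp [hE, WeierstrassCurve.baseChange]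
  have d1F : (Ed.baseChange F).a₁ = 0 := by simp [hEd, WeierstrassCurve.baseChange]
  have d2F : (Ed.baseChange F).a₂ = 0 := by simp [hEd, WeierstrassCurve.baseChange]
  have d3F : (Ed.baseChange F).a₃ = 0 := by simp [hEd, WeierstrassCurve.baseChange]
  have d4F : (Ed.baseChange F).a₄ = algebraMap L F (A * d ^ 2) := by
    simp [hEd, WeierstrassCurve.baseChange]
  have d6F : (Ed.baseChange F).a₆ = algebraMap L F (B * d ^ 3) := by
    simp [hEd, WeierstrassCurve.baseChange]
  -- scaling hypotheses for u = s⁻¹ from Ed over F to E over F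
  have t1 : (E.baseChange F).a₁ = s⁻¹ * (Ed.baseChange F).a₁ := by rw [e1F, d1F, mul_zero]
  have t2 : (E.baseChange F).a₂ = s⁻¹ ^ 2 * (Ed.baseChange F).a₂ := by rw [e2F, d2F, mul_zero]
  have t3 : (E.baseChange F).a₃ = s⁻¹ ^ 3 * (Ed.baseChange F).a₃ := by rw [e3F, d3F, mul_zero]
  have t4 : (E.baseChange F).a₄ = s⁻¹ ^ 4 * (Ed.baseChange F).a₄ := by
    rw [e4F, d4F, map_mul, ← hs4, inv_pow]
    field_simp
  have t6 : (E.baseChange F).a₆ = s⁻¹ ^ 6 * (Ed.baseChange F).a₆ := by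
    rw [e6F, d6F, map_mul, ← hs6, inv_pow]
    field_simp
  -- scaling hypotheses for u = s from E over F to Ed over F
  have r1 : (Ed.baseChange F).a₁ = s * (E.baseChange F).a₁ := by rw [e1F, d1F, mul_zero]
  have r2 : (Ed.baseChange F).a₂ = s ^ 2 * (E.baseChange F).a₂ := by rw [e2F, d2F, mul_zero]
  have r3 : (Ed.baseChange F).a₃ = s ^ 3 * (E.baseChange F).a₃ := by rw [e3F, d3F, mul_zero]
  have r4 : (Ed.baseChange F).a₄ = s ^ 4 * (E.baseChange F).a₄ := by
    rw [e4F, d4F, map_mul, hs4]; ring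
  have r6 : (Ed.baseChange F).a₆ = s ^ 6 * (E.baseChange F).a₆ := by
    rw [e6F, d6F, map_mul, hs6]; ring
  have hnegY : ∀ x y : F, (E.baseChange F).toAffine.negY x y = -y := by
    intro x y
    rw [WeierstrassCurve.Affine.negY, e1F, e3F]; ring
  -- the conjugation of F over L
  obtain ⟨σ, hσs, hσσ, hfixσ, hantiσ⟩ := QTConj.exists_conj d hd hF2 s hs
  -- the three group homomorphisms
  set ι : (E.baseChange L).toAffine.Point →+ (E.baseChange F).toAffine.Point := WeierstrassCurve.Affine.Point.map (W' := E) (Algebra.ofId L F) with hι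
  set Sg : (E.baseChange F).toAffine.Point →+ (E.baseChange F).toAffine.Point := WeierstrassCurve.Affine.Point.map (W' := E) σ.toAlgHom with hSg
  set τ : (Ed.baseChange L).toAffine.Point →+ (E.baseChange F).toAffine.Point :=
    (QTScale.scaleHom hsine t1 t2 t3 t4 t6).comp
      (WeierstrassCurve.Affine.Point.map (W' := Ed) (Algebra.ofId L F)) with hτ
  have hι_inj : Function.Injective ι := WeierstrassCurve.Affine.Point.map_injective (W' := E) _
  have hτ_inj : Function.Injective τ :=
    (QTScale.scaleHom_injective hsine t1 t2 t3 t4 t6).comp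
      (WeierstrassCurve.Affine.Point.map_injective (W' := Ed) _)
  -- Sg is an involution
  have hSgSg : ∀ P : (E.baseChange F).toAffine.Point, Sg (Sg P) = P := by
    rintro (_ | @⟨x, y, hP⟩)
    · rfl
    · simp only [hSg, WeierstrassCurve.Affine.Point.map_some,
        WeierstrassCurve.Affine.Point.some.injEq]
      exact ⟨hσσ x, hσσ y⟩
  -- Sg fixes the image of ι
  have hSgι : ∀ P : (E.baseChange L).toAffine.Point, Sg (ι P) = ι P := by
    rintro (_ | @⟨x, y, hP⟩)
    · rfl
    · simp only [hι, hSg, WeierstrassCurve.Affine.Point.map_some,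
        WeierstrassCurve.Affine.Point.some.injEq]
      constructor
      · show σ (Algebra.ofId L F x) = Algebra.ofId L F x
        rw [Algebra.ofId_apply, AlgEquiv.commutes]
      · show σ (Algebra.ofId L F y) = Algebra.ofId L F y
        rw [Algebra.ofId_apply, AlgEquiv.commutes]
  -- Sg negates the image of τ
  have hSgτ : ∀ Q : (Ed.baseChange L).toAffine.Point, Sg (τ Q) = -(τ Q) := by
    rintro (_ | @⟨x, y, hQ⟩)
    · show Sg (τ 0) = -(τ 0)
      rw [map_zero, map_zero, neg_zero]
    · show Sg (τ (WeierstrassCurve.Affine.Point.some _ _ hQ)) = _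
      rw [hτ, AddMonoidHom.comp_apply, WeierstrassCurve.Affine.Point.map_some,
        QTScale.scaleHom_apply_some]
      rw [hSg, WeierstrassCurve.Affine.Point.map_some]
      rw [WeierstrassCurve.Affine.Point.neg_some, WeierstrassCurve.Affine.Point.some.injEq]
      constructor
      · show σ (s⁻¹ ^ 2 * Algebra.ofId L F x) = s⁻¹ ^ 2 * Algebra.ofId L F x
        rw [map_mul, map_pow, map_inv₀, hσs, Algebra.ofId_apply, AlgEquiv.commutes]
        ring
      · show σ (s⁻¹ ^ 3 * Algebra.ofId L F y) = _
        rw [map_mul, map_pow, map_inv₀, hσs, Algebra.ofId_apply, AlgEquiv.commutes, hnegY,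
          inv_neg]
        ring
  -- fixed points of Sg come from (E.baseChange L).toAffine.Point
  have hfix : ∀ P : (E.baseChange F).toAffine.Point, Sg P = P → ∃ P₀ : (E.baseChange L).toAffine.Point, ι P₀ = P := by
    rintro (_ | @⟨x, y, hP⟩) hfixP
    · exact ⟨0, rfl⟩
    · rw [hSg, WeierstrassCurve.Affine.Point.map_some,
        WeierstrassCurve.Affine.Point.some.injEq] at hfixP
      obtain ⟨a, ha⟩ := hfixσ x hfixP.1
      obtain ⟨b, hb⟩ := hfixσ y hfixP.2
      have hP' : (E.baseChange F).toAffine.Nonsingular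
          (Algebra.ofId L F a) (Algebra.ofId L F b) := by
        rw [Algebra.ofId_apply, Algebra.ofId_apply, ← ha, ← hb]
        exact hP
      refine ⟨WeierstrassCurve.Affine.Point.some _ _
        ((WeierstrassCurve.Affine.baseChange_nonsingular E hinj a b).mp hP'), ?_⟩
      rw [hι, WeierstrassCurve.Affine.Point.map_some,
        WeierstrassCurve.Affine.Point.some.injEq]
      exact ⟨by rw [Algebra.ofId_apply, ← ha], by rw [Algebra.ofId_apply, ← hb]⟩
  -- anti-fixed points of Sg come from (Ed.baseChange L).toAffine.Point
  have hanti : ∀ P : (E.baseChange F).toAffine.Point, Sg P = -P → ∃ Q₀ : (Ed.baseChange L).toAffine.Point, τ Q₀ = P := by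
    rintro (_ | @⟨x, y, hP⟩) hantiP
    · exact ⟨0, map_zero τ⟩
    · rw [hSg, WeierstrassCurve.Affine.Point.map_some,
        WeierstrassCurve.Affine.Point.neg_some,
        WeierstrassCurve.Affine.Point.some.injEq, hnegY] at hantiP
      obtain ⟨a, ha⟩ := hfixσ x hantiP.1
      obtain ⟨b, hb⟩ := hantiσ y hantiP.2
      -- scale (x, y) = (alg a, alg b * s) by u = s to a point of Ed over F
      have hP2 : (Ed.baseChange F).toAffine.Nonsingular (s ^ 2 * x) (s ^ 3 * y) :=
        QTScale.scale_nonsingular _ _ s hsne r1 r2 r3 r4 r6 hP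
      have hx2 : s ^ 2 * x = Algebra.ofId L F (d * a) := by
        rw [Algebra.ofId_apply, map_mul, ← hs, ha]
      have hy2 : s ^ 3 * y = Algebra.ofId L F (d ^ 2 * b) := by
        rw [Algebra.ofId_apply, map_mul, ← hs4, hb]; ring
      rw [hx2, hy2] at hP2
      refine ⟨WeierstrassCurve.Affine.Point.some _ _
        ((WeierstrassCurve.Affine.baseChange_nonsingular Ed hinj _ _).mp hP2), ?_⟩
      rw [hτ, AddMonoidHom.comp_apply, WeierstrassCurve.Affine.Point.map_some,
        QTScale.scaleHom_apply_some, WeierstrassCurve.Affine.Point.some.injEq]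
      constructor
      · show s⁻¹ ^ 2 * Algebra.ofId L F (d * a) = x
        rw [Algebra.ofId_apply, map_mul, ← hs, ha, inv_pow]
        field_simp
      · show s⁻¹ ^ 3 * Algebra.ofId L F (d ^ 2 * b) = y
        rw [Algebra.ofId_apply, map_mul, ← hs4, hb, inv_pow]
        field_simp
  -- descent homomorphisms
  have hr₁ : ∀ P : (E.baseChange F).toAffine.Point, ∃ P₀ : (E.baseChange L).toAffine.Point, ι P₀ = P + Sg P := by
    intro P
    refine hfix _ ?_
    rw [map_add, hSgSg, add_comm]
  have hr₂ : ∀ P : (E.baseChange F).toAffine.Point, ∃ Q₀ : (Ed.baseChange L).toAffine.Point, τ Q₀ = P - Sg P := by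
    intro P
    refine hanti _ ?_
    rw [map_sub, hSgSg, neg_sub]
  let w₁ : (E.baseChange F).toAffine.Point →+ (E.baseChange L).toAffine.Point :=
    { toFun := fun P => (hr₁ P).choose
      map_zero' := hι_inj (by rw [(hr₁ 0).choose_spec, map_zero, map_zero, add_zero])
      map_add' := fun P Q => hι_inj (by
        rw [(hr₁ (P + Q)).choose_spec, map_add ι, (hr₁ P).choose_spec, (hr₁ Q).choose_spec,
          map_add]
        abel) }
  let w₂ : (E.baseChange F).toAffine.Point →+ (Ed.baseChange L).toAffine.Point :=
    { toFun := fun P => (hr₂ P).choose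
      map_zero' := hτ_inj (by rw [(hr₂ 0).choose_spec, map_zero, map_zero, sub_zero])
      map_add' := fun P Q => hτ_inj (by
        rw [(hr₂ (P + Q)).choose_spec, map_add τ, (hr₂ P).choose_spec, (hr₂ Q).choose_spec,
          map_add]
        abel) }
  have hw₁ : ∀ P : (E.baseChange F).toAffine.Point, ι (w₁ P) = P + Sg P := fun P => (hr₁ P).choose_spec
  have hw₂ : ∀ P : (E.baseChange F).toAffine.Point, τ (w₂ P) = P - Sg P := fun P => (hr₂ P).choose_spec
  -- the two mutually double-inverse homomorphisms
  let u : (E.baseChange L).toAffine.Point × (Ed.baseChange L).toAffine.Point →+ (E.baseChange F).toAffine.Point := AddMonoidHom.coprod ι τ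
  let w : (E.baseChange F).toAffine.Point →+ (E.baseChange L).toAffine.Point × (Ed.baseChange L).toAffine.Point := w₁.prod w₂
  have hwu : ∀ x : (E.baseChange L).toAffine.Point × (Ed.baseChange L).toAffine.Point, w (u x) = x + x := by
    rintro ⟨P, Q⟩
    have hu : u (P, Q) = ι P + τ Q := rfl
    have h1 : ι (w₁ (u (P, Q))) = ι (P + P) := by
      rw [hw₁, hu, map_add Sg, hSgι, hSgτ, map_add ι]
      abel
    have h2 : τ (w₂ (u (P, Q))) = τ (Q + Q) := by
      rw [hw₂, hu, map_add Sg, hSgι, hSgτ, map_add τ]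
      abel
    exact Prod.ext (hι_inj h1) (hτ_inj h2)
  have huw : ∀ P : (E.baseChange F).toAffine.Point, u (w P) = P + P := by
    intro P
    show ι (w₁ P) + τ (w₂ P) = P + P
    rw [hw₁, hw₂]
    abel
  calc Module.rank ℚ (ℚ ⊗[ℤ] (E.baseChange F).toAffine.Point)
      = Module.rank ℚ (ℚ ⊗[ℤ] ((E.baseChange L).toAffine.Point × (Ed.baseChange L).toAffine.Point)) :=
        (QTRank.rank_eq_of_double u w hwu huw).symm
    _ = Module.rank ℚ (ℚ ⊗[ℤ] (E.baseChange L).toAffine.Point) + Module.rank ℚ (ℚ ⊗[ℤ] (Ed.baseChange L).toAffine.Point) :=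
        QTRank.rank_prod_eq _ _
end
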